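/- Assume f and g are twice continuously differentiable. Let (x̄,ȳ,ȳ,s̄) ∈ F_S (i.e. with ū = ȳ) be an S-stationary point of SVF: there exist λ₀ ≥ 0 with λ₀(f(x̄,ȳ) − f(x̄,ȳ)) = 0, λ ∈ ℝ^m with λ_i ≥ 0, μ_φ ∈ ℝ^l and μ^g ∈ ℝ^m satisfying the three W-stationarity gradient equations of SVF at (x̄,ȳ,ȳ,s̄), μ^g_i = 0 for i ∈ I_s(x̄,ȳ), ⟨∇₂g_i(x̄,ȳ), μ_φ⟩ = 0 for i ∈ I_g(x̄,ȳ), and μ^g_i ≥ 0 and ⟨∇₂g_i(x̄,ȳ), μ_φ⟩ ≥ 0 for all i ∈ I_0(x̄,ȳ). Then (x̄,ȳ,s̄) is an S-stationary point of the KKT reformulation (KP): ∇₂f(x̄,ȳ) + Σ_i s̄_i ∇₂g_i(x̄,ȳ) = 0, s̄ ≥ 0, g(x̄,ȳ) ≤ 0, s̄_i·g_i(x̄,ȳ) = 0 for all i, and there exist μ ∈ ℝ^m and ν_φ ∈ ℝ^l such that: 0 = ∇₁F(x̄,ȳ) + [∇₂₁²f + Σ_{i∈I(x̄,ȳ)}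 s̄_i ∇₂₁²g_i](x̄,ȳ)ᵀν_φ + Σ_{i∈I(x̄,ȳ)} μ_i ∇₁g_i(x̄,ȳ); 0 = ∇₂F(x̄,ȳ) + Σ_{i∈I(x̄,ȳ)} μ_i ∇₂g_i(x̄,ȳ) + [∇₂₂²f + Σ_{i∈I(x̄,ȳ)} s̄_i ∇₂₂²g_i](x̄,ȳ)ᵀν_φ; μ_i = 0 for i ∈ I_s(x̄,ȳ); ⟨∇₂g_i(x̄,ȳ), ν_φ⟩ = 0 for i ∈ I_g(x̄,ȳ); and μ_i ≥ 0, ⟨∇₂g_i(x̄,ȳ), ν_φ⟩ ≥ 0 for all i ∈ I_0(x̄,ȳ). -/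
import Mathlib


open scoped InnerProductSpace
open Filter Topology

noncomputable section

/-- Euclidean space ℝ^n. -/
abbrev E (n : ℕ) : Type := EuclideanSpace ℝ (Fin n)

variable {d l m : ℕ}

/-- Gradient with respect to the first argument. -/
noncomputable def grad1 (f : E d × E l → ℝ) (x : E d) (y : E l) : E d :=
  gradient (fun x' => f (x', y)) x

/-- Gradient with respect to the second argument. -/
noncomputable def grad2 (f : E d × E l → ℝ) (x : E d) (y : E l) : E l :=
  gradient (fun y' => f (x, y')) y

/-- The lower level feasible set `Y(x) = {y : g(x,y) ≤ 0}`. -/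
def Yset (g : Fin m → E d × E l → ℝ) (x : E d) : Set (E l) :=
  {y | ∀ i, g i (x, y) ≤ 0}

/-- The lower level solution set `S(x)`. -/
def Sset (f : E d × E l → ℝ) (g : Fin m → E d × E l → ℝ) (x : E d) : Set (E l) :=
  {y | y ∈ Yset g x ∧ ∀ y' ∈ Yset g x, f (x, y) ≤ f (x, y')}

/-- The lower level Lagrangian `L(x,u,s) = f(x,u) + Σᵢ sᵢ gᵢ(x,u)`. -/
noncomputable def Lag (f : E d × E l → ℝ) (g : Fin m → E d × E l → ℝ)
    (x : E d) (u : E l) (s : Fin m → ℝ) : ℝ :=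
  f (x, u) + ∑ i, s i * g i (x, u)

/-- The lower level multiplier set `M(x,u)`. -/
def Mset (f : E d × E l → ℝ) (g : Fin m → E d × E l → ℝ) (x : E d) (u : E l) :
    Set (Fin m → ℝ) :=
  {s | grad2 f x u + ∑ i, s i • grad2 (g i) x u = 0 ∧ (∀ i, 0 ≤ s i) ∧
       ∑ i, s i * g i (x, u) = 0}

/-- Assumption (A): pseudoconvexity of the lower level Lagrangian. -/
def AssumptionA (f : E d × E l → ℝ) (g : Fin m → E d × E l → ℝ) : Prop :=
  ∀ (x : E d), ∀ u1 ∈ Yset g x, ∀ u2 ∈ Yset g x, ∀ s ∈ Mset f g x u2,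
    0 ≤ ⟪u1 - u2, gradient (fun u' => Lag f g x u' s) u2⟫_ℝ →
    Lag f g x u2 s ≤ Lag f g x u1 s

/-- The lower level KKT conditions at `(x,u)` with multiplier `s`. -/
def LLKKT (f : E d × E l → ℝ) (g : Fin m → E d × E l → ℝ)
    (x : E d) (u : E l) (s : Fin m → ℝ) : Prop :=
  grad2 f x u + ∑ i, s i • grad2 (g i) x u = 0 ∧
  ∀ i, 0 ≤ s i ∧ g i (x, u) ≤ 0 ∧ s i * g i (x, u) = 0

/-- Membership in the feasible set `F_S` of the SVF formulation. -/
def FSmem (f : E d × E l → ℝ) (g : Fin m → E d × E l → ℝ)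
    (x : E d) (y u : E l) (s : Fin m → ℝ) : Prop :=
  f (x, y) - f (x, u) ≤ 0 ∧ LLKKT f g x u s ∧ ∀ i, g i (x, y) ≤ 0

/-- The value function `V(x) = inf {f(x,y) : y ∈ Y(x)}`. -/
noncomputable def Vval (f : E d × E l → ℝ) (g : Fin m → E d × E l → ℝ) (x : E d) : ℝ :=
  sInf ((fun y => f (x, y)) '' Yset g x)

/-- Smoothness data: `f`, `g` are `C¹` jointly, and `C²` in the second variable. -/
def SmoothData (f : E d × E l → ℝ) (g : Fin m → E d × E l → ℝ) : Prop :=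
  ContDiff ℝ 1 f ∧ (∀ i, ContDiff ℝ 1 (g i)) ∧
  (∀ x : E d, ContDiff ℝ 2 (fun y : E l => f (x, y))) ∧
  ∀ i, ∀ x : E d, ContDiff ℝ 2 (fun y : E l => g i (x, y))

/-- `[∇₂₁²f + Σᵢ cᵢ ∇₂₁²gᵢ](x,u)ᵀμ`: the gradient at `x` of
`x' ↦ ⟪∇₂f(x',u) + Σᵢ cᵢ ∇₂gᵢ(x',u), μ⟫` with `u` fixed. -/
noncomputable def grad21 (f : E d × E l → ℝ) (g : Fin m → E d × E l → ℝ)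
    (c : Fin m → ℝ) (μ : E l) (x : E d) (u : E l) : E d :=
  gradient (fun x' => ⟪grad2 f x' u + ∑ i, c i • grad2 (g i) x' u, μ⟫_ℝ) x

/-- `[∇₂₂²f + Σᵢ cᵢ ∇₂₂²gᵢ](x,u)ᵀμ`: the gradient at `u` of
`u' ↦ ⟪∇₂f(x,u') + Σᵢ cᵢ ∇₂gᵢ(x,u'), μ⟫` with `x` fixed. -/
noncomputable def grad22 (f : E d × E l → ℝ) (g : Fin m → E d × E l → ℝ)
    (c : Fin m → ℝ) (μ : E l) (x : E d) (u : E l) : E l :=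
  gradient (fun u' => ⟪grad2 f x u' + ∑ i, c i • grad2 (g i) x u', μ⟫_ℝ) u

/-- The three W-stationarity gradient equations of SVF at `(x,y,u,s)` with multipliers
`(lam0, lam, muphi, mug)`; the sums over active index sets are written as full sums,
the multipliers being required (separately) to vanish off the active sets. -/
noncomputable def WStatEqs (F f : E d × E l → ℝ) (g : Fin m → E d × E l → ℝ)
    (x : E d) (y u : E l) (s : Fin m → ℝ)
    (lam0 : ℝ) (lam : Fin m → ℝ) (muphi : E l) (mug : Fin m → ℝ) : Prop :=
  grad1 F x y + lam0 • (grad1 f x y - grad1 f x u) + ∑ i, lam i • grad1 (g i) x y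
      + grad21 f g s muphi x u + ∑ i, mug i • grad1 (g i) x u = 0 ∧
  grad2 F x y + lam0 • grad2 f x y + ∑ i, lam i • grad2 (g i) x y = 0 ∧
  -(lam0 • grad2 f x u) + ∑ i, mug i • grad2 (g i) x u + grad22 f g s muphi x u = 0

/-- an S-stationary point `(x̄,ȳ,ȳ,s̄)` of SVF (with `ū = ȳ`) yields an
S-stationary point `(x̄,ȳ,s̄)` of the KKT reformulation (KP). -/
theorem svf_S_stationary_implies_kp_S_stationary
    {d l m : ℕ} (hd : 0 < d) (hl : 0 < l) (hm : 0 < m)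
    (F f : E d × E l → ℝ) (g : Fin m → E d × E l → ℝ)
    (hF : ContDiff ℝ 1 F) (hf : ContDiff ℝ 2 f) (hg : ∀ i, ContDiff ℝ 2 (g i))
    (xb : E d) (yb : E l) (sb : Fin m → ℝ)
    (hFS : FSmem f g xb yb yb sb)
    -- S-stationarity of SVF at (x̄,ȳ,ȳ,s̄)
    (lam0 : ℝ) (lam : Fin m → ℝ) (muphi : E l) (mug : Fin m → ℝ)
    (hlam0 : 0 ≤ lam0) (hcomp0 : lam0 * (f (xb, yb) - f (xb, yb)) = 0)
    (hlam : ∀ i, 0 ≤ lam i)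
    (hlamI : ∀ i, g i (xb, yb) ≠ 0 → lam i = 0)
    (hmugIs : ∀ i, g i (xb, yb) < 0 ∧ sb i = 0 → mug i = 0)
    (hW : WStatEqs F f g xb yb yb sb lam0 lam muphi mug)
    (hIg : ∀ i, g i (xb, yb) = 0 → 0 < sb i → ⟪grad2 (g i) xb yb, muphi⟫_ℝ = 0)
    (hI0 : ∀ i, g i (xb, yb) = 0 → sb i = 0 →
      0 ≤ mug i ∧ 0 ≤ ⟪grad2 (g i) xb yb, muphi⟫_ℝ) :
    -- (x̄,ȳ,s̄) is an S-stationary point of KP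
    LLKKT f g xb yb sb ∧
    ∃ (mu : Fin m → ℝ) (nuphi : E l),
      (grad1 F xb yb + grad21 f g sb nuphi xb yb
        + ∑ i, mu i • grad1 (g i) xb yb = 0) ∧
      (grad2 F xb yb + ∑ i, mu i • grad2 (g i) xb yb
        + grad22 f g sb nuphi xb yb = 0) ∧
      (∀ i, g i (xb, yb) < 0 ∧ sb i = 0 → mu i = 0) ∧
      (∀ i, g i (xb, yb) ≠ 0 → mu i = 0) ∧
      (∀ i, g i (xb, yb) = 0 → 0 < sb i → ⟪grad2 (g i) xb yb, nuphi⟫_ℝ = 0) ∧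
      (∀ i, g i (xb, yb) = 0 → sb i = 0 →
        0 ≤ mu i ∧ 0 ≤ ⟪grad2 (g i) xb yb, nuphi⟫_ℝ) := by
  obtain ⟨hval, hkkt, hfeas⟩ := hFS
  obtain ⟨hW1, hW2, hW3⟩ := hW
  have hsum1 : ∑ i, (lam + mug) i • grad1 (g i) xb yb
      = ∑ i, lam i • grad1 (g i) xb yb + ∑ i, mug i • grad1 (g i) xb yb := by
    rw [← Finset.sum_add_distrib]
    simp [add_smul]
  have hsum2 : ∑ i, (lam + mug) i • grad2 (g i) xb yb
      = ∑ i, lam i • grad2 (g i) xb yb + ∑ i, mug i • grad2 (g i) xb yb := by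
    rw [← Finset.sum_add_distrib]
    simp [add_smul]
  refine ⟨hkkt, lam + mug, muphi, ?_, ?_, ?_, ?_, ?_, ?_⟩
  · simp only [sub_self, smul_zero, add_zero] at hW1
    rw [hsum1, ← hW1]
    abel
  · calc grad2 F xb yb + ∑ i, (lam + mug) i • grad2 (g i) xb yb
        + grad22 f g sb muphi xb yb
        = (grad2 F xb yb + lam0 • grad2 f xb yb + ∑ i, lam i • grad2 (g i) xb yb)
          + (-(lam0 • grad2 f xb yb) + ∑ i, mug i • grad2 (g i) xb yb
            + grad22 f g sb muphi xb yb) := by rw [hsum2]; abel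
      _ = 0 := by rw [hW2, hW3, add_zero]
  · intro i hi
    simp only [Pi.add_apply]
    rw [hlamI i (ne_of_lt hi.1), hmugIs i hi, add_zero]
  · intro i hi
    have hgle : g i (xb, yb) ≤ 0 := (hkkt.2 i).2.1
    have hglt : g i (xb, yb) < 0 := lt_of_le_of_ne hgle hi
    have hs : sb i = 0 := by
      have := (hkkt.2 i).2.2
      rcases mul_eq_zero.mp this with h | h
      · exact h
      · exact absurd h hi
    simp only [Pi.add_apply]
    rw [hlamI i hi, hmugIs i ⟨hglt, hs⟩, add_zero]
  · exact hIg
  · intro i h0 hs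
    obtain ⟨h1, h2⟩ := hI0 i h0 hs
    exact ⟨add_nonneg (hlam i) h1, h2⟩
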